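/- Let B₁, …, B_k ⊆ ℝ² be finite nonempty sets and let q ∈ ℝ² with q ∉ convexHull(B_i) for every i. For each i, let a_i, b_i ∈ B_i satisfy cross(a_i − q, p − q) ≥ 0 and cross(b_i − q, p − q) ≤ 0 for every p ∈ B_i. Let X = {a₁, …, a_k} ∪ {b₁, …, b_k}. Then q ∈ convexHull(B₁ ∪ ⋯ ∪ B_k) if and only if q ∈ convexHull(X). (Correctness of the non-decomposable point-location query: when the query point is outside every bucket's hull, it lies in the hull of the whole point set exactly when it lies in the hull of the 2k tangent points.) -/

import Mathlib

/-- The planar cross product. -/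
def cross (u v : ℝ × ℝ) : ℝ := u.1 * v.2 - u.2 * v.1

lemma coord_eval (f : (ℝ × ℝ) →L[ℝ] ℝ) (v : ℝ × ℝ) :
    f v = f (1,0) * v.1 + f (0,1) * v.2 := by
  have h : v = v.1 • ((1:ℝ),(0:ℝ)) + v.2 • ((0:ℝ),(1:ℝ)) := by ext <;> simp
  calc f v = f (v.1 • ((1:ℝ),(0:ℝ)) + v.2 • ((0:ℝ),(1:ℝ))) := by rw [← h]
    _ = f (1,0) * v.1 + f (0,1) * v.2 := by
        rw [map_add, map_smul, map_smul, smul_eq_mul, smul_eq_mul]; ring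

lemma key (a1 a2 b1 b2 p1 p2 f1 f2 g1 g2 : ℝ)
    (hgA : 0 < g1*a1 + g2*a2) (hgB : 0 < g1*b1 + g2*b2) (hgP : 0 < g1*p1 + g2*p2)
    (h1 : 0 ≤ a1*p2 - a2*p1) (h2 : b1*p2 - b2*p1 ≤ 0) (hD : 0 ≤ a1*b2 - a2*b1)
    (hfA : 0 < f1*a1 + f2*a2) (hfB : 0 < f1*b1 + f2*b2) : 0 < f1*p1 + f2*p2 := by
  rcases eq_or_lt_of_le hD with hD0 | hDpos
  · -- degenerate case : cross A B = 0
    -- D * (g·P) = α (g·A) + β (g·B) with α = p1*b2 - p2*b1 ≥ 0, β = a1*p2 - a2*p1 ≥ 0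
    have hid : (a1*b2 - a2*b1) * (g1*p1 + g2*p2)
        = (p1*b2 - p2*b1) * (g1*a1 + g2*a2) + (a1*p2 - a2*p1) * (g1*b1 + g2*b2) := by ring
    have hα : 0 ≤ p1*b2 - p2*b1 := by linarith
    have hβ : a1*p2 - a2*p1 = 0 := by
      nlinarith [mul_nonneg hα hgA.le, mul_nonneg h1 hgB.le]
    -- identity: (f·P)(g·A) = (f·A)(g·P) - (f1 g2 - f2 g1)(a1 p2 - a2 p1)
    have hid2 : (f1*p1 + f2*p2) * (g1*a1 + g2*a2)
        = (f1*a1 + f2*a2) * (g1*p1 + g2*p2) - (f1*g2 - f2*g1) * (a1*p2 - a2*p1) := by ring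
    rw [hβ, mul_zero, sub_zero] at hid2
    by_contra hc
    push_neg at hc
    nlinarith [mul_pos hfA hgP, mul_nonneg (neg_nonneg.2 hc) hgA.le]
  · -- D > 0
    have hα : 0 ≤ p1*b2 - p2*b1 := by linarith
    have hgid : (a1*b2 - a2*b1) * (g1*p1 + g2*p2)
        = (p1*b2 - p2*b1) * (g1*a1 + g2*a2) + (a1*p2 - a2*p1) * (g1*b1 + g2*b2) := by ring
    have hfid : (a1*b2 - a2*b1) * (f1*p1 + f2*p2)
        = (p1*b2 - p2*b1) * (f1*a1 + f2*a2) + (a1*p2 - a2*p1) * (f1*b1 + f2*b2) := by ring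
    have hsum : 0 < (p1*b2 - p2*b1) + (a1*p2 - a2*p1) := by
      by_contra hc
      push_neg at hc
      have hα0 : p1*b2 - p2*b1 = 0 := by linarith
      have hβ0 : a1*p2 - a2*p1 = 0 := by linarith
      nlinarith
    have : 0 < (a1*b2 - a2*b1) * (f1*p1 + f2*p2) := by
      rw [hfid]
      rcases lt_or_ge 0 (p1*b2 - p2*b1) with h | h
      · have := mul_pos h hfA
        nlinarith [mul_nonneg h1 hfB.le]
      · have hα0 : p1*b2 - p2*b1 = 0 := le_antisymm h hα
        have hβpos : 0 < a1*p2 - a2*p1 := by nlinarith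
        nlinarith [mul_pos hβpos hfB]
    nlinarith [this]

/-- Correctness of the non-decomposable point-location query: if the query point `q`
lies outside every bucket's hull, then `q` lies in the hull of the whole point set
exactly when it lies in the hull of the `2k` tangent points. -/
theorem point_location_via_tangents {k : ℕ} (B : Fin k → Set (ℝ × ℝ))
    (hBfin : ∀ i, (B i).Finite) (hBne : ∀ i, (B i).Nonempty) (q : ℝ × ℝ)
    (hq : ∀ i, q ∉ convexHull ℝ (B i))
    (a b : Fin k → ℝ × ℝ) (ha : ∀ i, a i ∈ B i) (hb : ∀ i, b i ∈ B i)
    (hta : ∀ i, ∀ p ∈ B i, 0 ≤ cross (a i - q) (p - q))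
    (htb : ∀ i, ∀ p ∈ B i, cross (b i - q) (p - q) ≤ 0) :
    q ∈ convexHull ℝ (⋃ i, B i) ↔
      q ∈ convexHull ℝ (Set.range a ∪ Set.range b) := by
  constructor
  · intro hmem
    by_contra hX
    -- separate q from the hull of the tangent points
    have hXfin : (Set.range a ∪ Set.range b).Finite :=
      (Set.finite_range a).union (Set.finite_range b)
    obtain ⟨f, u, hfq, hfX⟩ := geometric_hahn_banach_point_closed
      (convex_convexHull ℝ _) (hXfin.isClosed_convexHull (𝕜 := ℝ)) hX
    have hfX' : ∀ x ∈ Set.range a ∪ Set.range b, 0 < f x - f q := by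
      intro x hx
      have := hfX x (subset_convexHull ℝ _ hx)
      linarith
    -- separate q from each bucket's hull
    have hsep : ∀ i, ∃ g : (ℝ × ℝ) →L[ℝ] ℝ, ∀ p ∈ B i, 0 < g p - g q := by
      intro i
      obtain ⟨g, u, hgq, hgB⟩ := geometric_hahn_banach_point_closed
        (convex_convexHull ℝ _) ((hBfin i).isClosed_convexHull (𝕜 := ℝ)) (hq i)
      exact ⟨g, fun p hp => by have := hgB p (subset_convexHull ℝ _ hp); linarith⟩
    choose g hg using hsep
    -- every point of every bucket is strictly on the far side of q w.r.t. f
    have hmain : ∀ p ∈ ⋃ i, B i, 0 < f p - f q := by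
      intro p hp
      obtain ⟨i, hpB⟩ := Set.mem_iUnion.1 hp
      have hfa : 0 < f (a i) - f q := hfX' _ (Or.inl ⟨i, rfl⟩)
      have hfb : 0 < f (b i) - f q := hfX' _ (Or.inr ⟨i, rfl⟩)
      have hga : 0 < g i (a i) - g i q := hg i _ (ha i)
      have hgb : 0 < g i (b i) - g i q := hg i _ (hb i)
      have hgp : 0 < g i p - g i q := hg i _ hpB
      have e1 : ∀ (h : (ℝ × ℝ) →L[ℝ] ℝ) (x : ℝ × ℝ),
          h x - h q = h (1,0) * (x - q).1 + h (0,1) * (x - q).2 := by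
        intro h x
        rw [← map_sub, coord_eval]
      rw [e1] at hfa hfb hga hgb hgp ⊢
      have h1 := hta i p hpB
      have h2 := htb i p hpB
      have hD : cross (b i - q) (a i - q) ≤ 0 := htb i (a i) (ha i)
      simp only [cross] at h1 h2 hD
      set A := a i - q
      set Bv := b i - q
      set P := p - q
      have := key A.1 A.2 Bv.1 Bv.2 P.1 P.2 (f (1,0)) (f (0,1))
        (g i (1,0)) (g i (0,1))
        (by linarith) (by linarith) (by linarith)
        h1 (by linarith) (by linarith)
        (by linarith) (by linarith)
      linarith
    -- but q is in the hull of the union: contradiction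
    have hsub : convexHull ℝ (⋃ i, B i) ⊆ {x | f q < f x} := by
      apply convexHull_min
      · intro x hx
        have := hmain x hx
        simp only [Set.mem_setOf_eq]
        linarith
      · exact convex_halfSpace_gt (f.toLinearMap.isLinear) _
    have := hsub hmem
    simp at this
  · intro hmem
    refine convexHull_mono ?_ hmem
    rintro x (⟨i, rfl⟩ | ⟨i, rfl⟩)
    · exact Set.mem_iUnion.2 ⟨i, ha i⟩
    · exact Set.mem_iUnion.2 ⟨i, hb i⟩
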